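/- Let φ : ℂ → ℂ be locally Lipschitz, i.e., Lipschitz on every compact subset of ℂ. Then for every metric space K and every f ∈ D(K), the composition φ∘f belongs to D(K). Moreover, if λ = sup_{k∈K} |f(k)| and φ is Lipschitz with constant M on the closed disc {z ∈ ℂ : |z| ≤ λ}, then ‖φ∘f‖_D ≤ sup_{|z|≤λ} |φ(z)| + M‖f‖_D. -/

import Mathlib

open Filter Set Topology ENNReal

noncomputable section

universe u v

/-- The `ℓ¹`-type bound `sup_k Σ_j |φ_j(k)|` of a sequence of functions, in `ℝ≥0∞`. -/
def DBound {K : Type u} [MetricSpace K] (φ : ℕ → K → ℂ) : ℝ≥0∞ :=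
  ⨆ k : K, ∑' j : ℕ, (‖φ j k‖₊ : ℝ≥0∞)

/-- `φ` is a sequence of continuous functions summing pointwise to `f`. -/
def IsDRep {K : Type u} [MetricSpace K] (f : K → ℂ) (φ : ℕ → K → ℂ) : Prop :=
  (∀ j, Continuous (φ j)) ∧ ∀ k, HasSum (fun j => φ j k) (f k)

/-- `f` belongs to `D(K)`: it has a representing sequence with finite bound. -/
def MemD {K : Type u} [MetricSpace K] (f : K → ℂ) : Prop :=
  ∃ φ : ℕ → K → ℂ, IsDRep f φ ∧ DBound φ < ⊤

/-- The `D`-norm of `f`, equal to `⊤` when `f ∉ D(K)`. -/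
def DNorm {K : Type u} [MetricSpace K] (f : K → ℂ) : ℝ≥0∞ :=
  ⨅ (φ : ℕ → K → ℂ) (_ : IsDRep f φ), DBound φ

/-- The quotient `D`-seminorm: distance in `D`-norm to the bounded continuous functions. -/
def qDNorm {K : Type u} [MetricSpace K] (f : K → ℂ) : ℝ≥0∞ :=
  ⨅ (φ : K → ℂ) (_ : Continuous φ ∧ ∃ C : ℝ, ∀ k, ‖φ k‖ ≤ C), DNorm (f - φ)

/-- Upper semicontinuous envelope of `g`, computed relative to the subspace `L`. -/
def uscEnvWithin {K : Type u} [MetricSpace K] (L : Set K) (g : K → ℝ≥0∞) (x : K) : ℝ≥0∞ :=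
  ⨅ U ∈ 𝓝 x, ⨆ y ∈ U ∩ L, g y

/-- `limsup_{y→x, y ∈ L} (|f(y) - f(x)| + g(y))` (non-exclusive limsup, relative to `L`). -/
def toscSuccWithin {K : Type u} [MetricSpace K] (f : K → ℂ) (L : Set K)
    (g : K → ℝ≥0∞) (x : K) : ℝ≥0∞ :=
  ⨅ U ∈ 𝓝 x, ⨆ y ∈ U ∩ L, ((‖f y - f x‖₊ : ℝ≥0∞) + g y)

/-- The finite oscillations `osc_n (f|_L)` of `f` restricted to `L`. -/
def oscNWithin {K : Type u} [MetricSpace K] (f : K → ℂ) (L : Set K) : ℕ → K → ℝ≥0∞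
  | 0 => fun _ => 0
  | n + 1 => uscEnvWithin L (toscSuccWithin f L (oscNWithin f L n))

/-- The oscillation `osc (f|_L)` of `f` restricted to `L`. -/
def oscWithin {K : Type u} [MetricSpace K] (f : K → ℂ) (L : Set K) : K → ℝ≥0∞ :=
  oscNWithin f L 1

/-- The finite oscillations `osc_n f`. -/
def oscN {K : Type u} [MetricSpace K] (f : K → ℂ) (n : ℕ) : K → ℝ≥0∞ :=
  oscNWithin f Set.univ n

/-- `osc_ω (f|_L)`: the usc envelope (relative to `L`) of `sup_n osc_n (f|_L)`. -/
def oscOmegaWithin {K : Type u} [MetricSpace K] (f : K → ℂ) (L : Set K) : K → ℝ≥0∞ :=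
  uscEnvWithin L (fun x => ⨆ n : ℕ, oscNWithin f L n x)

/-- `osc_ω f`. -/
def oscOmega {K : Type u} [MetricSpace K] (f : K → ℂ) : K → ℝ≥0∞ :=
  oscOmegaWithin f Set.univ

/-- `osc_{ω+1} (f|_L)`. -/
def oscOmegaSuccWithin {K : Type u} [MetricSpace K] (f : K → ℂ) (L : Set K) : K → ℝ≥0∞ :=
  uscEnvWithin L (toscSuccWithin f L (oscOmegaWithin f L))

/-- The oscillation sets `os_n(f, (ε_i))` (here `ε : ℕ → ℝ` is 0-indexed, so `ε 0 = ε_1`). -/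
def osSets {K : Type u} [MetricSpace K] (f : K → ℂ) (ε : ℕ → ℝ) : ℕ → Set K
  | 0 => Set.univ
  | n + 1 => {x ∈ osSets f ε n | ENNReal.ofReal (ε n) ≤ oscWithin f (osSets f ε n) x}

/-- The `ε`-Baire index `i_B(f, ε) = sup {n : os_n(f,ε) ≠ ∅} ∈ ℕ∞`. -/
def baireIndexE {K : Type u} [MetricSpace K] (f : K → ℂ) (ε : ℝ) : ℕ∞ :=
  ⨆ (n : ℕ) (_ : (osSets f (fun _ => ε) n).Nonempty), (n : ℕ∞)

/-- The Baire index `i_B(f) = sup_{ε > 0} i_B(f,ε)`. -/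
def baireIndexTotal {K : Type u} [MetricSpace K] (f : K → ℂ) : ℕ∞ :=
  ⨆ (ε : ℝ) (_ : 0 < ε), baireIndexE f ε

/-- The sets `os_n(f, ω, ε)` defined using `osc_ω` of successive restrictions. -/
def osOmegaSets {K : Type u} [MetricSpace K] (f : K → ℂ) (ε : ℝ≥0∞) : ℕ → Set K
  | 0 => Set.univ
  | n + 1 => {x ∈ osOmegaSets f ε n | ε ≤ oscOmegaWithin f (osOmegaSets f ε n) x}

/-- The index `i(f, ω, ε)`, valued in `ℝ≥0∞`. -/
def iOmega {K : Type u} [MetricSpace K] (f : K → ℂ) (ε : ℝ≥0∞) : ℝ≥0∞ :=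
  ⨆ (n : ℕ) (_ : (osOmegaSets f ε n).Nonempty), (n : ℝ≥0∞)

/-- The transfinite oscillations `osc_β f`. -/
def oscOrd {K : Type u} [MetricSpace K] (f : K → ℂ) (β : Ordinal.{v}) : K → ℝ≥0∞ :=
  Ordinal.limitRecOn β (fun _ => 0)
    (fun _ ih => uscEnvWithin Set.univ (toscSuccWithin f Set.univ ih))
    (fun γ _ ih => uscEnvWithin Set.univ (fun x => ⨆ (α : Ordinal) (h : α < γ), ih α h x))

/-- The weight of a topological space: least cardinality of a basis. -/
def tweight (K : Type u) [TopologicalSpace K] : Cardinal.{u} :=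
  ⨅ (B : Set (Set K)) (_ : TopologicalSpace.IsTopologicalBasis B), Cardinal.mk B

/-- `f` belongs to `B_{1/4}(K)`. -/
def MemB14 {K : Type u} [MetricSpace K] (f : K → ℂ) : Prop :=
  ∃ (g : ℕ → K → ℂ) (lam : ℝ≥0∞), lam < ⊤ ∧
    (∀ n, MemD (g n) ∧ DNorm (g n) ≤ lam) ∧ TendstoUniformly g f atTop

/-- The `B_{1/4}`-norm of `f`. -/
def B14Norm {K : Type u} [MetricSpace K] (f : K → ℂ) : ℝ≥0∞ :=
  ⨅ (lam : ℝ≥0∞) (_ : ∃ g : ℕ → K → ℂ,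
    (∀ n, MemD (g n) ∧ DNorm (g n) ≤ lam) ∧ TendstoUniformly g f atTop), lam

/-- `f` belongs to `SD(K)`: the closure in `D`-norm of the simple `D`-functions. -/
def MemSD {K : Type u} [MetricSpace K] (f : K → ℂ) : Prop :=
  MemD f ∧ ∀ ε : ℝ≥0∞, 0 < ε →
    ∃ φ : K → ℂ, (Set.range φ).Finite ∧ MemD φ ∧ DNorm (f - φ) < ε

/-- The algebra of sets generated by the open subsets of `K`. -/
inductive DAlg (K : Type u) [TopologicalSpace K] : Set K → Prop
  | basic (U : Set K) : IsOpen U → DAlg K U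
  | compl (A : Set K) : DAlg K A → DAlg K Aᶜ
  | union (A B : Set K) : DAlg K A → DAlg K B → DAlg K (A ∪ B)

/-- `W` is a difference of two closed sets. -/
def IsDCS {K : Type u} [TopologicalSpace K] (W : Set K) : Prop :=
  ∃ A B : Set K, IsClosed A ∧ IsClosed B ∧ W = A \ B

/-- The boundary of `A ∩ L` relative to the subspace `L`. -/
def relBoundary {K : Type u} [TopologicalSpace K] (L A : Set K) : Set K :=
  L ∩ closure (A ∩ L) ∩ closure (L \ A)

/-- The iterated boundaries `∂^n A` (with `∂^0 A = K`). -/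
def iterBoundary {K : Type u} [TopologicalSpace K] (A : Set K) : ℕ → Set K
  | 0 => Set.univ
  | n + 1 => relBoundary (iterBoundary A n) A

/-- The Baire index `i(A)` of a set: the largest `n` with `∂^n A ≠ ∅`. -/
def setIndex {K : Type u} [TopologicalSpace K] (A : Set K) : ℕ∞ :=
  ⨆ (n : ℕ) (_ : (iterBoundary A n).Nonempty), (n : ℕ∞)

/-- The iterated derived sets `K^{(n)}` of the space `K`. -/
def derivedIter (K : Type u) [TopologicalSpace K] : ℕ → Set K
  | 0 => Set.univ
  | n + 1 => {x | AccPt x (Filter.principal (derivedIter K n))}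

end


section AuxStmt10

open scoped NNReal ENNReal RealInnerProductSpace

universe u

noncomputable def radProj (lam : ℝ) (z : ℂ) : ℂ := (lam / max lam ‖z‖) • z

lemma radProj_eq {lam : ℝ} {z : ℂ} (h : ‖z‖ ≤ lam) : radProj lam z = z := by
  rcases eq_or_lt_of_le ((norm_nonneg z).trans h) with h0 | h0
  · have hz : z = 0 := norm_eq_zero.1 (le_antisymm (h.trans h0.symm.le) (norm_nonneg z))
    simp [radProj, hz]
  · rw [radProj, max_eq_left h, div_self h0.ne', one_smul]

lemma radProj_mem {lam : ℝ} (hl : 0 ≤ lam) (z : ℂ) :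
    radProj lam z ∈ Metric.closedBall (0 : ℂ) lam := by
  rcases eq_or_lt_of_le hl with h0 | h0
  · simp [radProj, ← h0]
  · have hm : 0 < max lam ‖z‖ := lt_max_iff.2 (Or.inl h0)
    have h1 : ‖radProj lam z‖ = lam / max lam ‖z‖ * ‖z‖ := by
      rw [radProj, norm_smul, Real.norm_eq_abs,
        abs_of_nonneg (div_nonneg hl hm.le)]
    rw [Metric.mem_closedBall, dist_zero_right, h1]
    calc lam / max lam ‖z‖ * ‖z‖ ≤ lam / max lam ‖z‖ * max lam ‖z‖ := by
          gcongr
          exact le_max_right _ _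
      _ = lam := div_mul_cancel₀ _ hm.ne'

lemma radProj_lipschitz {lam : ℝ} (hl : 0 ≤ lam) : LipschitzWith 1 (radProj lam) := by
  refine LipschitzWith.of_dist_le_mul fun z w => ?_
  simp only [NNReal.coe_one, one_mul, dist_eq_norm]
  rcases eq_or_lt_of_le hl with h0 | h0
  · simp [radProj, ← h0, norm_nonneg]
  set A := ‖z‖ with hA
  set B := ‖w‖ with hB
  have hA0 : (0:ℝ) ≤ A := norm_nonneg z
  have hB0 : (0:ℝ) ≤ B := norm_nonneg w
  have hp : ⟪z, w⟫ ≤ A * B := real_inner_le_norm z w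
  have expand : ∀ s t : ℝ, ‖s • z - t • w‖ ^ 2
      = s ^ 2 * A ^ 2 - 2 * (s * t) * ⟪z, w⟫ + t ^ 2 * B ^ 2 := by
    intro s t
    rw [norm_sub_sq_real, norm_smul, norm_smul, real_inner_smul_left, real_inner_smul_right,
      Real.norm_eq_abs, Real.norm_eq_abs, mul_pow, mul_pow, sq_abs, sq_abs]
    ring
  have key : ‖radProj lam z - radProj lam w‖ ^ 2 ≤ ‖z - w‖ ^ 2 := by
    have hzw : ‖z - w‖ ^ 2 = A ^ 2 - 2 * ⟪z, w⟫ + B ^ 2 := by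
      rw [norm_sub_sq_real]
    by_cases hz : A ≤ lam <;> by_cases hw : B ≤ lam
    · simp [radProj_eq hz, radProj_eq hw]
    · -- A ≤ lam < B
      push_neg at hw
      have hBpos : (0:ℝ) < B := hl.trans_lt hw
      rw [radProj_eq hz, radProj, max_eq_right hw.le]
      nth_rewrite 1 [show z = (1:ℝ) • z from (one_smul ℝ z).symm]
      rw [expand, hzw]
      set t := lam / B with ht
      have htB : t * B = lam := div_mul_cancel₀ _ hBpos.ne'
      have ht1 : t ≤ 1 := by rw [ht, div_le_one hBpos]; exact hw.le
      have ht0 : 0 ≤ t := div_nonneg h0.le hBpos.le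
      nlinarith [mul_nonneg (sub_nonneg.2 ht1) (sub_nonneg.2 hp),
        mul_nonneg (sub_nonneg.2 hw.le) (sub_nonneg.2 hz),
        mul_nonneg (sub_nonneg.2 hw.le) (sub_nonneg.2 (hz.trans hw.le : A ≤ B))]
    · push_neg at hz
      have hApos : (0:ℝ) < A := hl.trans_lt hz
      rw [radProj_eq hw, radProj, max_eq_right hz.le]
      nth_rewrite 1 [show w = (1:ℝ) • w from (one_smul ℝ w).symm]
      rw [expand, hzw]
      set s := lam / A with hs
      have hsA : s * A = lam := div_mul_cancel₀ _ hApos.ne'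
      have hs1 : s ≤ 1 := by rw [hs, div_le_one hApos]; exact hz.le
      have hs0 : 0 ≤ s := div_nonneg h0.le hApos.le
      nlinarith [mul_nonneg (sub_nonneg.2 hs1) (sub_nonneg.2 hp),
        mul_nonneg (sub_nonneg.2 hz.le) (sub_nonneg.2 hw),
        mul_nonneg (sub_nonneg.2 hz.le) (sub_nonneg.2 (hw.trans hz.le : B ≤ A))]
    · push_neg at hz hw
      have hApos : (0:ℝ) < A := hl.trans_lt hz
      have hBpos : (0:ℝ) < B := hl.trans_lt hw
      rw [radProj, radProj, max_eq_right hz.le, max_eq_right hw.le, expand, hzw]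
      set s := lam / A with hs
      set t := lam / B with ht
      have hsA : s * A = lam := div_mul_cancel₀ _ hApos.ne'
      have htB : t * B = lam := div_mul_cancel₀ _ hBpos.ne'
      have hs1 : s ≤ 1 := by rw [hs, div_le_one hApos]; exact hz.le
      have ht1 : t ≤ 1 := by rw [ht, div_le_one hBpos]; exact hw.le
      have hs0 : 0 ≤ s := div_nonneg h0.le hApos.le
      have ht0 : 0 ≤ t := div_nonneg h0.le hBpos.le
      have hstAB : s * t * (A * B) = lam ^ 2 := by
        rw [show s * t * (A * B) = (s * A) * (t * B) by ring, hsA, htB]; ring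
      have hst1 : s * t ≤ 1 := mul_le_one₀ hs1 ht0 ht1
      nlinarith [mul_nonneg (sub_nonneg.2 hst1) (sub_nonneg.2 hp), sq_nonneg (A - B)]
  nlinarith [norm_nonneg (radProj lam z - radProj lam w), norm_nonneg (z - w), key]


lemma key_rep {K : Type u} [MetricSpace K] (ψ : ℂ → ℂ) (M : ℝ≥0) (hψ : LipschitzWith M ψ)
    (f : K → ℂ) (g : ℕ → K → ℂ) (hrep : IsDRep f g) :
    ∃ h : ℕ → K → ℂ, IsDRep (fun k => ψ (f k)) h ∧
      DBound h ≤ (‖ψ 0‖₊ : ℝ≥0∞) + (M : ℝ≥0∞) * DBound g := by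
  obtain ⟨hgc, hgs⟩ := hrep
  set s : ℕ → K → ℂ := fun n k => ∑ j ∈ Finset.range n, g j k with hs
  have hsc : ∀ n, Continuous (s n) := fun n => continuous_finset_sum _ fun j _ => hgc j
  refine ⟨fun n k => Nat.casesOn n (ψ 0) (fun m => ψ (s (m+1) k) - ψ (s m k)),
    ⟨?_, ?_⟩, ?_⟩
  · rintro (_ | j)
    · exact continuous_const
    · exact ((hψ.continuous.comp (hsc (j+1))).sub (hψ.continuous.comp (hsc j)) :)
  · intro k
    set h : ℕ → ℂ := fun n =>
      Nat.casesOn n (ψ 0) (fun m => ψ (s (m+1) k) - ψ (s m k)) with hh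
    show HasSum h (ψ (f k))
    have hb : ∀ n, ‖h (n+1)‖ ≤ (M : ℝ) * ‖g n k‖ := by
      intro n
      have h1 : s (n+1) k - s n k = g n k := by
        simp [hs, Finset.sum_range_succ]
      have := hψ.dist_le_mul (s (n+1) k) (s n k)
      rwa [dist_eq_norm, dist_eq_norm, h1] at this
    have hgn : Summable fun n => ‖g n k‖ := summable_norm_iff.mpr (hgs k).summable
    have hhn : Summable fun n => ‖h n‖ := by
      refine (summable_nat_add_iff 1).mp ?_
      exact Summable.of_nonneg_of_le (fun n => norm_nonneg _) hb (hgn.mul_left _)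
    refine hasSum_iff_tendsto_nat_of_summable_norm hhn |>.mpr ?_
    have h2 : ∀ N, ∑ n ∈ Finset.range (N+1), h n = ψ (s N k) := by
      intro N
      induction N with
      | zero => simp [hh, hs]
      | succ m ih =>
        rw [Finset.sum_range_succ, ih]
        show ψ (s m k) + (ψ (s (m+1) k) - ψ (s m k)) = _
        ring
    have h3 : Tendsto (fun N => ψ (s N k)) atTop (𝓝 (ψ (f k))) :=
      (hψ.continuous.tendsto _).comp ((hgs k).tendsto_sum_nat)
    refine (tendsto_add_atTop_iff_nat 1).mp ?_
    simpa [h2] using h3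
  · refine iSup_le fun k => ?_
    have ht : (∑' n : ℕ, (‖(Nat.casesOn n (ψ 0) (fun m => ψ (s (m+1) k) - ψ (s m k)) : ℂ)‖₊ : ℝ≥0∞))
        = (‖ψ 0‖₊ : ℝ≥0∞) + ∑' n : ℕ, (‖ψ (s (n+1) k) - ψ (s n k)‖₊ : ℝ≥0∞) := by
      rw [tsum_eq_zero_add' ENNReal.summable]
      simp
    rw [ht]
    gcongr
    calc (∑' n : ℕ, (‖ψ (s (n+1) k) - ψ (s n k)‖₊ : ℝ≥0∞))
        ≤ ∑' n : ℕ, (M : ℝ≥0∞) * (‖g n k‖₊ : ℝ≥0∞) := by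
          refine ENNReal.tsum_le_tsum fun n => ?_
          have h1 : s (n+1) k - s n k = g n k := by
            simp [hs, Finset.sum_range_succ]
          have := hψ.nndist_le (s (n+1) k) (s n k)
          rw [nndist_eq_nnnorm, nndist_eq_nnnorm, h1] at this
          exact_mod_cast this
      _ = (M : ℝ≥0∞) * ∑' n : ℕ, (‖g n k‖₊ : ℝ≥0∞) := ENNReal.tsum_mul_left
      _ ≤ (M : ℝ≥0∞) * DBound g := by
          gcongr
          exact le_iSup (fun k => ∑' j : ℕ, (‖g j k‖₊ : ℝ≥0∞)) k

end AuxStmt10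

open scoped NNReal in
/-- locally Lipschitz functions operate on `D(K)`, with the quantitative
bound `‖φ∘f‖_D ≤ sup_{|z|≤λ} |φ(z)| + M ‖f‖_D`. -/
theorem stmt10 (φ : ℂ → ℂ)
    (hφ : ∀ C : Set ℂ, IsCompact C → ∃ M : NNReal, LipschitzOnWith M φ C) :
    ∀ (K : Type u) [MetricSpace K], ∀ f : K → ℂ, MemD f →
      MemD (fun k => φ (f k)) ∧
      ∀ (lam : ℝ) (M : NNReal), (∀ k, ‖f k‖ ≤ lam) →
        LipschitzOnWith M φ (Metric.closedBall 0 lam) →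
        DNorm (fun k => φ (f k)) ≤
          (⨆ z ∈ Metric.closedBall (0 : ℂ) lam, (‖φ z‖₊ : ℝ≥0∞)) + (M : ℝ≥0∞) * DNorm f := by
  intro K _ f hf
  obtain ⟨g, hg, hgB⟩ := hf
  constructor
  · -- membership
    set C := (DBound g).toReal with hCdef
    have hC0 : 0 ≤ C := ENNReal.toReal_nonneg
    have hC : ∀ k, ‖f k‖ ≤ C := by
      intro k
      have hsum : Summable fun j => ‖g j k‖ := summable_norm_iff.mpr (hg.2 k).summable
      have hsum' : Summable fun j => ‖g j k‖₊ := by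
        rw [← NNReal.summable_coe]; simpa using hsum
      have h1 : ‖f k‖ ≤ ∑' j, ‖g j k‖ := by
        rw [← (hg.2 k).tsum_eq]
        exact norm_tsum_le_tsum_norm hsum
      refine h1.trans ?_
      have h2 : (∑' j : ℕ, (‖g j k‖₊ : ℝ≥0∞)) ≤ DBound g :=
        le_iSup (fun k => ∑' j : ℕ, (‖g j k‖₊ : ℝ≥0∞)) k
      have h3 : (∑' j : ℕ, (‖g j k‖₊ : ℝ≥0∞)) = ((∑' j, ‖g j k‖₊ : ℝ≥0) : ℝ≥0∞) :=
        (ENNReal.coe_tsum hsum').symm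
      have h4 := ENNReal.toReal_mono hgB.ne h2
      rw [h3, ENNReal.coe_toReal] at h4
      refine le_trans (le_of_eq ?_) h4
      rw [NNReal.coe_tsum]
      simp
    obtain ⟨M₀, hM₀⟩ := hφ (Metric.closedBall 0 C) (isCompact_closedBall _ _)
    have hψlip : LipschitzWith M₀ (fun z => φ (radProj C z)) := by
      have h1 : LipschitzOnWith (M₀ * 1) (φ ∘ radProj C) Set.univ :=
        hM₀.comp ((radProj_lipschitz hC0).lipschitzOnWith) fun z _ => radProj_mem hC0 z
      rw [mul_one, lipschitzOnWith_univ] at h1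
      exact h1
    obtain ⟨h, hhrep, hhB⟩ := key_rep _ M₀ hψlip f g hg
    have heq : (fun k => φ (radProj C (f k))) = (fun k => φ (f k)) := by
      funext k; rw [radProj_eq (hC k)]
    rw [heq] at hhrep
    exact ⟨h, hhrep, lt_of_le_of_lt hhB (ENNReal.add_lt_top.mpr
      ⟨ENNReal.coe_lt_top, ENNReal.mul_lt_top ENNReal.coe_lt_top hgB⟩)⟩
  · intro lam M hlam hM
    rcases isEmpty_or_nonempty K with hK | hK
    · have h1 : DNorm (fun k => φ (f k)) ≤ DBound (fun (_ : ℕ) (_ : K) => 0) :=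
        iInf_le_of_le _ (iInf_le _ ⟨fun _ => continuous_const, fun k => hK.elim k⟩)
      have h2 : DBound (fun (_ : ℕ) (_ : K) => (0 : ℂ)) = 0 := by
        rw [DBound, iSup_of_empty]; rfl
      rw [h2] at h1
      exact h1.trans zero_le
    · have hlam0 : 0 ≤ lam := (norm_nonneg (f (Classical.arbitrary K))).trans (hlam _)
      set SB := ⨆ z ∈ Metric.closedBall (0 : ℂ) lam, (‖φ z‖₊ : ℝ≥0∞) with hSB
      have hψlip : LipschitzWith M (fun z => φ (radProj lam z)) := by
        have h1 : LipschitzOnWith (M * 1) (φ ∘ radProj lam) Set.univ :=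
          hM.comp ((radProj_lipschitz hlam0).lipschitzOnWith) fun z _ => radProj_mem hlam0 z
        rw [mul_one, lipschitzOnWith_univ] at h1
        exact h1
      have heq : (fun k => φ (radProj lam (f k))) = (fun k => φ (f k)) := by
        funext k; rw [radProj_eq (hlam k)]
      have hB0 : (‖φ (radProj lam 0)‖₊ : ℝ≥0∞) ≤ SB :=
        le_iSup₂ (f := fun z (_ : z ∈ Metric.closedBall (0 : ℂ) lam) => (‖φ z‖₊ : ℝ≥0∞))
          (radProj lam 0) (radProj_mem hlam0 0)
      have main : ∀ g' : ℕ → K → ℂ, IsDRep f g' →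
          DNorm (fun k => φ (f k)) ≤ SB + (M : ℝ≥0∞) * DBound g' := by
        intro g' hg'
        obtain ⟨h', hrep', hB'⟩ := key_rep _ M hψlip f g' hg'
        rw [heq] at hrep'
        have h5 : DNorm (fun k => φ (f k)) ≤ DBound h' :=
          iInf_le_of_le h' (iInf_le _ hrep')
        exact h5.trans (hB'.trans (by gcongr))
      refine ENNReal.le_of_forall_pos_le_add fun ε hε hfin => ?_
      rcases eq_or_ne (M : ℝ≥0∞) 0 with hM0 | hM0
      · have h6 := main g hg
        rw [hM0, zero_mul, add_zero] at h6 ⊢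
        exact h6.trans le_self_add
      · have hMt : (M : ℝ≥0∞) ≠ ⊤ := ENNReal.coe_ne_top
        have hDfin : DNorm f ≠ ⊤ := by
          intro hD
          rw [hD, ENNReal.mul_top hM0, add_top] at hfin
          exact (lt_irrefl _ hfin).elim
        have hεM : (ε : ℝ≥0∞) / M ≠ 0 :=
          ENNReal.div_ne_zero.mpr ⟨by exact_mod_cast hε.ne', hMt⟩
        have hlt : DNorm f < DNorm f + (ε : ℝ≥0∞) / M := ENNReal.lt_add_right hDfin hεM
        obtain ⟨g', hg', hBg'⟩ : ∃ g' : ℕ → K → ℂ, IsDRep f g' ∧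
            DBound g' < DNorm f + (ε : ℝ≥0∞) / M := by
          have h7 : DNorm f < DNorm f + (ε : ℝ≥0∞) / M := hlt
          rw [DNorm, iInf_lt_iff] at h7
          obtain ⟨g', hg7⟩ := h7
          rw [iInf_lt_iff] at hg7
          obtain ⟨hrep7, hlt7⟩ := hg7
          exact ⟨g', hrep7, hlt7⟩
        calc DNorm (fun k => φ (f k)) ≤ SB + (M : ℝ≥0∞) * DBound g' := main g' hg'
          _ ≤ SB + (M : ℝ≥0∞) * (DNorm f + (ε : ℝ≥0∞) / M) := add_le_add_right (mul_le_mul_right hBg'.le _) _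
          _ = SB + (M : ℝ≥0∞) * DNorm f + (M : ℝ≥0∞) * ((ε : ℝ≥0∞) / M) := by
              rw [mul_add, add_assoc]
          _ = SB + (M : ℝ≥0∞) * DNorm f + ε := by rw [ENNReal.mul_div_cancel hM0 hMt]
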